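/- (Claim 4, forward direction, labeling part 2) Let P be a popular matching leaving exactly U uncovered, P_Z ⊆ P as above, V' = Z ∪ P_Z(Z) ∪ U, and let D ⊆ Z be the set of 'dangerous' vertices: vertices z reachable in G'_{P_Z} on an alternating path from a blocking edge such that z is the far end of its matching edge on the path. Then every edge of G between D and V ∖ V' is labeled (−,−) with respect to P. -/

import Mathlib

/-- A roommates instance: a simple graph together with, for each vertex,
a ranking of vertices (lower rank = more preferred), injective on neighbors. -/
structure Roommates (V : Type*) where
  G : SimpleGraph V
  rank : V → V → ℕ
  rank_inj : ∀ u a b, G.Adj u a → G.Adj u b → rank u a = rank u b → a = b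

variable {V : Type*}

/-- `M` encodes a matching: `M u = some v` means `u` is matched to `v`. -/
def IsMatching (R : Roommates V) (M : V → Option V) : Prop :=
  ∀ u v, M u = some v → R.G.Adj u v ∧ M v = some u

/-- Vertex `v` prefers matching `M` to matching `M'`. -/
def Prefers (R : Roommates V) (M M' : V → Option V) (v : V) : Prop :=
  (∃ w, M v = some w ∧ M' v = none) ∨
  (∃ w w', M v = some w ∧ M' v = some w' ∧ R.rank v w < R.rank v w')

/-- `M` is popular: it never loses a head-to-head election. -/
def Popular [Fintype V] (R : Roommates V) (M : V → Option V) : Prop :=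
  ∀ M', IsMatching R M' →
    {v | Prefers R M' M v}.ncard ≤ {v | Prefers R M M' v}.ncard

/-- Edge `(u,v)` blocks `M`: each endpoint is unmatched or prefers the other
endpoint to its partner. -/
def Blocks (R : Roommates V) (M : V → Option V) (u v : V) : Prop :=
  R.G.Adj u v ∧ M u ≠ some v ∧
  (∀ w, M u = some w → R.rank u v < R.rank u w) ∧
  (∀ w, M v = some w → R.rank v u < R.rank v w)

def IsStable (R : Roommates V) (M : V → Option V) : Prop :=
  ∀ u v, ¬ Blocks R M u v

/-- `u` votes `+` for `v` against its situation in `M`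
(true when `u` is unmatched or prefers `v` to its `M`-partner). -/
def VotePlus (R : Roommates V) (M : V → Option V) (u v : V) : Prop :=
  ∀ w, M u = some w → R.rank u v < R.rank u w

/-- Non-matching edge of `G_M`, i.e. not labeled `(−,−)`. -/
def NonMatchEdge (R : Roommates V) (M : V → Option V) (u v : V) : Prop :=
  R.G.Adj u v ∧ M u ≠ some v ∧ (VotePlus R M u v ∨ VotePlus R M v u)

/-- `AltList A M b l`: the list of vertices `l` forms an alternating sequence,
whose first edge is a matching edge if `b = true` and an allowed (`A`)
non-matching edge if `b = false`. -/
def AltList (A : V → V → Prop) (M : V → Option V) : Bool → List V → Prop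
  | _, [] => True
  | _, [_] => True
  | true, u :: v :: rest => M u = some v ∧ AltList A M false (v :: rest)
  | false, u :: v :: rest => A u v ∧ AltList A M true (v :: rest)

/-- A matching of the subgraph induced on `W`. -/
def IsMatchingOn (R : Roommates V) (W : Set V) (M : V → Option V) : Prop :=
  IsMatching R M ∧ ∀ u v, M u = some v → u ∈ W ∧ v ∈ W

/-- Popularity within the subgraph induced on `W`. -/
def PopularOn (R : Roommates V) (W : Set V) (M : V → Option V) : Prop :=
  ∀ M', IsMatchingOn R W M' →
    {v | v ∈ W ∧ Prefers R M' M v}.ncard ≤ {v | v ∈ W ∧ Prefers R M M' v}.ncard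

/-- Stability within the subgraph induced on `W`. -/
def StableOn (R : Roommates V) (W : Set V) (M : V → Option V) : Prop :=
  ∀ u v, u ∈ W → v ∈ W → ¬ Blocks R M u v

section Engine

def GoodEdge (R : Roommates V) (P : V → Option V) (a b : V) : Prop :=
  R.G.Adj a b ∧ P a ≠ some b ∧ P b ≠ some a ∧ (VotePlus R P a b ∨ VotePlus R P b a)

def flatP : List (V × V) → List V
  | [] => []
  | p :: r => p.1 :: p.2 :: flatP r

@[simp] lemma flatP_nil : (flatP ([] : List (V × V))) = [] := rfl
@[simp] lemma flatP_cons (p : V × V) (r : List (V × V)) :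
    flatP (p :: r) = p.1 :: p.2 :: flatP r := rfl

lemma flatP_append (l1 l2 : List (V × V)) : flatP (l1 ++ l2) = flatP l1 ++ flatP l2 := by
  induction l1 with
  | nil => simp
  | cons p r ih => simp [ih]

lemma mem_flatP {v : V} : ∀ {ps : List (V × V)}, v ∈ flatP ps → ∃ p ∈ ps, v = p.1 ∨ v = p.2 := by
  intro ps
  induction ps with
  | nil => simp
  | cons p r ih =>
    intro hv
    rcases List.mem_cons.1 hv with h | hv2
    · exact ⟨p, by simp, Or.inl h⟩
    · rcases List.mem_cons.1 hv2 with h | hv3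
      · exact ⟨p, by simp, Or.inr h⟩
      · obtain ⟨q, hq, hq2⟩ := ih hv3
        exact ⟨q, by simp [hq], hq2⟩

lemma pair_mem_flatP {c d : V} : ∀ {ps : List (V × V)}, (c, d) ∈ ps →
    c ∈ flatP ps ∧ d ∈ flatP ps := by
  intro ps
  induction ps with
  | nil => simp
  | cons p r ih =>
    intro h
    rcases List.mem_cons.1 h with h | h
    · subst h; simp
    · obtain ⟨h1, h2⟩ := ih h
      simp [h1, h2]

variable [DecidableEq V]

def swapP (P : V → Option V) (drop : Option V) : List (V × V) → V → Option V
  | [] => fun v => if some v = drop then none else P v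
  | p :: r => fun v =>
      if v = p.1 then some p.2 else if v = p.2 then some p.1 else swapP P drop r v

lemma swapP_not_mem (P : V → Option V) (drop : Option V) :
    ∀ (ps : List (V × V)) (v : V), v ∉ flatP ps → v ∉ drop.toList →
      swapP P drop ps v = P v := by
  intro ps
  induction ps with
  | nil =>
    intro v _ hd
    have : some v ≠ drop := by
      cases drop with
      | none => simp
      | some d => simp at hd ⊢; exact hd
    simp [swapP, this]
  | cons p r ih =>
    intro v hv hd
    simp only [flatP_cons, List.mem_cons, not_or] at hv
    simp [swapP, hv.1, hv.2.1, ih v hv.2.2 hd]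

lemma swapP_pair (P : V → Option V) (drop : Option V) :
    ∀ (ps : List (V × V)) (c d : V), (flatP ps).Nodup → (c, d) ∈ ps →
      swapP P drop ps c = some d ∧ swapP P drop ps d = some c := by
  intro ps
  induction ps with
  | nil => simp
  | cons p r ih =>
    intro c d hnd hmem
    simp only [flatP_cons, List.nodup_cons, List.mem_cons] at hnd
    obtain ⟨h1, h2, h3⟩ := hnd
    rcases List.mem_cons.1 hmem with h | h
    · obtain ⟨p1, p2⟩ := p
      obtain ⟨e1, e2⟩ := Prod.mk.injEq .. ▸ h
      subst e1; subst e2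
      constructor
      · simp [swapP]
      · have : d ≠ c := by simp at h1; intro e; exact h1.1 e.symm
        simp [swapP, this]
    · obtain ⟨hc, hd⟩ := pair_mem_flatP h
      have hc1 : c ≠ p.1 := by intro e; subst e; exact h1 (Or.inr hc)
      have hc2 : c ≠ p.2 := by intro e; subst e; exact h2 hc
      have hd1 : d ≠ p.1 := by intro e; subst e; exact h1 (Or.inr hd)
      have hd2 : d ≠ p.2 := by intro e; subst e; exact h2 hd
      obtain ⟨r1, r2⟩ := ih c d h3 h
      exact ⟨by simp [swapP, hc1, hc2, r1], by simp [swapP, hd1, hd2, r2]⟩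

lemma swapP_drop (P : V → Option V) (d : V) :
    ∀ (ps : List (V × V)), (flatP ps ++ [d]).Nodup →
      swapP P (some d) ps d = none := by
  intro ps
  induction ps with
  | nil => simp [swapP]
  | cons p r ih =>
    intro hnd
    have hdisj := List.disjoint_of_nodup_append hnd
    have h1 : d ≠ p.1 := by
      intro e
      exact hdisj (a := d) (by simp [e]) (by simp)
    have h2 : d ≠ p.2 := by
      intro e
      exact hdisj (a := d) (by simp [e]) (by simp)
    have hr : (flatP r ++ [d]).Nodup := by
      simp only [flatP_cons] at hnd
      rw [List.cons_append, List.cons_append] at hnd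
      exact (List.nodup_cons.1 (List.nodup_cons.1 hnd).2).2
    simp [swapP, h1, h2, ih hr]


lemma prefers_irrefl (R : Roommates V) {M M' : V → Option V} {v : V}
    (h : M v = M' v) : ¬ Prefers R M M' v := by
  intro hp
  rcases hp with ⟨w, h1, h2⟩ | ⟨w, w', h1, h2, h3⟩
  · rw [← h, h1] at h2; exact Option.some_ne_none w h2
  · rw [← h, h1] at h2
    obtain rfl := Option.some.inj h2
    exact lt_irrefl _ h3

lemma not_prefers_both (R : Roommates V) {M M' : V → Option V} {v : V}
    (h1 : Prefers R M M' v) (h2 : Prefers R M' M v) : False := by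
  rcases h1 with ⟨w, a1, a2⟩ | ⟨w, w', a1, a2, a3⟩ <;>
    rcases h2 with ⟨u, b1, b2⟩ | ⟨u, u', b1, b2, b3⟩
  · rw [a2] at b1; exact Option.some_ne_none u b1.symm
  · rw [a2] at b1; exact Option.some_ne_none u b1.symm
  · rw [b2] at a1; exact Option.some_ne_none w a1.symm
  · rw [a1] at b2; rw [a2] at b1
    obtain rfl := Option.some.inj b1
    obtain rfl := Option.some.inj b2
    exact lt_asymm a3 b3

lemma mem_T (R : Roommates V) {M' P : V → Option V} {v w : V}
    (h : M' v = some w) (hv : VotePlus R P v w) : Prefers R M' P v := by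
  cases hPv : P v with
  | none => exact Or.inl ⟨w, h, hPv⟩
  | some w0 => exact Or.inr ⟨w, w0, h, hPv, hv w0 hPv⟩

theorem engine [Fintype V] (R : Roommates V) (P : V → Option V)
    (hP : IsMatching R P) (hpop : Popular R P)
    (a b : V) (prs : List (V × V)) (drop : Option V)
    (hnd : (flatP ((a,b) :: prs) ++ drop.toList).Nodup)
    (hgood : ∀ p ∈ (a,b) :: prs, GoodEdge R P p.1 p.2)
    (hclosed : ∀ v ∈ flatP ((a,b) :: prs) ++ drop.toList, ∀ w, P v = some w →
        w ∈ flatP ((a,b) :: prs) ++ drop.toList)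
    (hab : VotePlus R P a b) (hba : VotePlus R P b a) : False := by
  classical
  set ps := (a,b) :: prs with hps
  set M' := swapP P drop ps with hM'def
  have hndf : (flatP ps).Nodup := (List.nodup_append.1 hnd).1
  have hndd : (flatP ps).Disjoint drop.toList := List.disjoint_of_nodup_append hnd
  have pairfact : ∀ c d : V, (c,d) ∈ ps → M' c = some d ∧ M' d = some c :=
    fun c d h => swapP_pair P drop ps c d hndf h
  have hMab := pairfact a b (by simp [hps])
  have memfact : ∀ v ∈ flatP ps,
      ∃ w, ((v,w) ∈ ps ∨ (w,v) ∈ ps) ∧ M' v = some w ∧ M' w = some v := by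
    intro v hv
    obtain ⟨p, hp, hc⟩ := mem_flatP hv
    obtain ⟨p1, p2⟩ := p
    rcases hc with rfl | rfl
    · exact ⟨p2, Or.inl hp, pairfact _ p2 hp⟩
    · exact ⟨p1, Or.inr hp, (pairfact p1 _ hp).2, (pairfact p1 _ hp).1⟩
  have dropfact : ∀ v ∈ Option.toList drop, drop = some v ∧ M' v = none := by
    intro v hv
    cases drop with
    | none => simp at hv
    | some d =>
      simp only [Option.toList_some, List.mem_singleton] at hv
      subst hv
      refine ⟨rfl, swapP_drop P v ps ?_⟩
      simpa using hnd
  have notmem : ∀ v, v ∉ flatP ps ++ drop.toList → M' v = P v := by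
    intro v hv
    simp only [List.mem_append, not_or] at hv
    exact swapP_not_mem P drop ps v hv.1 hv.2
  -- M' is a matching
  have hM' : IsMatching R M' := by
    intro u v h
    by_cases hu : u ∈ flatP ps
    · obtain ⟨w, hw, h1, h2⟩ := memfact u hu
      obtain rfl : v = w := by
        rw [h] at h1; exact Option.some.inj h1
      refine ⟨?_, h2⟩
      rcases hw with hw | hw
      · exact (hgood _ hw).1
      · exact ((hgood _ hw).1).symm
    · by_cases hd : u ∈ Option.toList drop
      · rw [(dropfact u hd).2] at h
        exact absurd h (by simp)
      · have hPu : M' u = P u := notmem u (by simp [hu, hd])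
        rw [hPu] at h
        have hvn : v ∉ flatP ps ++ drop.toList := by
          intro hv
          have := hclosed v hv u (hP u v h).2
          simp only [List.mem_append] at this
          rcases this with h' | h'
          · exact hu h'
          · exact hd h'
        rw [notmem v hvn]
        exact hP u v h
  -- vote facts at (a,b)
  have haT : Prefers R M' P a := mem_T R hMab.1 hab
  have hbT : Prefers R M' P b := mem_T R hMab.2 hba
  have haS : ¬ Prefers R P M' a := by
    intro h
    rcases h with ⟨w, h1, h2⟩ | ⟨w, w', h1, h2, h3⟩
    · rw [hMab.1] at h2; exact Option.some_ne_none b h2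
    · rw [hMab.1] at h2
      obtain rfl := Option.some.inj h2.symm
      exact lt_asymm (hab w h1) h3
  have hbS : ¬ Prefers R P M' b := fun h => not_prefers_both R h hbT
  -- the step lemma
  have step : ∀ v, Prefers R P M' v →
      (M' v = none ∧ drop = some v) ∨
      (∃ w, M' v = some w ∧ M' w = some v ∧ Prefers R M' P w ∧ w ≠ b) := by
    intro v hv
    have hvsup : v ∈ flatP ps ++ drop.toList := by
      by_contra hns
      exact prefers_irrefl R (notmem v hns).symm hv
    rw [List.mem_append] at hvsup
    rcases hvsup with hvf | hvd
    · obtain ⟨w, hw, h1, h2⟩ := memfact v hvf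
      right
      have hPvw : P v ≠ some w ∧ (VotePlus R P v w ∨ VotePlus R P w v) := by
        rcases hw with hw | hw
        · exact ⟨(hgood _ hw).2.1, (hgood _ hw).2.2.2⟩
        · refine ⟨(hgood _ hw).2.2.1, ((hgood _ hw).2.2.2).symm⟩
      rcases hv with ⟨w0, g1, g2⟩ | ⟨w0, w', g1, g2, g3⟩
      · rw [h1] at g2; exact absurd g2 (Option.some_ne_none w)
      · have hww : w' = w := by rw [h1] at g2; exact (Option.some.inj g2).symm
        rw [hww] at g3
        have hvw : VotePlus R P w v := by
          rcases hPvw.2 with hvp | hvp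
          · exact absurd (hvp w0 g1) (lt_asymm g3)
          · exact hvp
        refine ⟨w, h1, h2, mem_T R h2 hvw, ?_⟩
        intro e
        rw [e] at h2
        have hva : v = a := by
          rw [hMab.2] at h2; exact (Option.some.inj h2).symm
        exact haS (hva ▸ (Or.inr ⟨w0, w, g1, h1, g3⟩ : Prefers R P M' v))

    · exact Or.inl ⟨(dropfact v hvd).2, (dropfact v hvd).1⟩
  have hane : a ≠ b := by
    have h := hndf
    rw [hps, flatP_cons] at h
    intro e
    exact (List.nodup_cons.1 h).1 (by simp [e])
  -- counting
  set S := {v | Prefers R P M' v} with hS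
  set T := {v | Prefers R M' P v} with hT
  have hmaps : ∀ v ∈ S, (fun v => (M' v).getD a) v ∈ T \ {b} := by
    intro v hv
    rcases step v hv with ⟨h1, _⟩ | ⟨w, h1, _, h3, h4⟩
    · simp only [h1, Option.getD_none]
      exact ⟨haT, hane⟩
    · simp only [h1, Option.getD_some]
      exact ⟨h3, h4⟩
  have hinj : Set.InjOn (fun v => (M' v).getD a) S := by
    intro v1 hv1 v2 hv2 he
    rcases step v1 hv1 with ⟨a1, a2⟩ | ⟨w1, a1, a2, _, _⟩ <;>
      rcases step v2 hv2 with ⟨b1, b2⟩ | ⟨w2, b1, b2, _, _⟩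
    · rw [a2] at b2; exact Option.some.inj b2
    · exfalso
      simp only [a1, b1, Option.getD_none, Option.getD_some] at he
      rw [← he, hMab.1] at b2
      have : v2 = b := Option.some.inj b2.symm
      subst this
      exact hbS hv2
    · exfalso
      simp only [a1, b1, Option.getD_none, Option.getD_some] at he
      rw [he, hMab.1] at a2
      have : v1 = b := Option.some.inj a2.symm
      subst this
      exact hbS hv1
    · simp only [a1, b1, Option.getD_some] at he
      subst he
      rw [a2] at b2
      exact Option.some.inj b2
  have hle : S.ncard ≤ (T \ {b}).ncard :=
    Set.ncard_le_ncard_of_injOn _ hmaps hinj (Set.toFinite _)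
  have hlt : (T \ {b}).ncard < T.ncard :=
    Set.ncard_diff_singleton_lt_of_mem hbT (Set.toFinite _)
  have hge := hpop M' hM'
  rw [← hS, ← hT] at hge
  omega

end Engine

theorem alt_extract (R : Roommates V) (PZ : V → Option V) (hPZ : IsMatching R PZ)
    (A : V → V → Prop) :
    ∀ (rest : List V) (a : V), AltList A PZ false (a :: rest) → Odd (a :: rest).length →
      ∃ (pr : List (V × V)) (z : V), a :: rest = flatP pr ++ [z] ∧
        (∀ p ∈ pr, A p.1 p.2) ∧
        (∀ v ∈ rest, ∃ w ∈ rest, PZ v = some w ∧ PZ w = some v)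
  | [], a, _, _ => ⟨[], a, rfl, by simp, by simp⟩
  | [b], a, _, h => by
    exfalso
    rw [Nat.odd_iff] at h
    simp at h
  | b :: c :: r, a, halt, hodd => by
    obtain ⟨hab, hbc, halt'⟩ : A a b ∧ PZ b = some c ∧ AltList A PZ false (c :: r) := halt
    have hodd' : Odd (c :: r).length := by
      rw [Nat.odd_iff] at hodd ⊢
      simp only [List.length_cons] at hodd ⊢
      omega
    obtain ⟨pr, z, heq, hA, hm⟩ := alt_extract R PZ hPZ A r c halt' hodd'
    refine ⟨(a, b) :: pr, z, ?_, ?_, ?_⟩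
    · simp only [flatP_cons, List.cons_append, ← heq]
    · intro p hp
      rcases List.mem_cons.1 hp with h | h
      · rw [h]; exact hab
      · exact hA p h
    · intro v hv
      rcases List.mem_cons.1 hv with h | hv2
      · subst h
        exact ⟨c, by simp, hbc, (hPZ v c hbc).2⟩
      rcases List.mem_cons.1 hv2 with h | hv3
      · subst h
        exact ⟨b, by simp, (hPZ b v hbc).2, hbc⟩
      · obtain ⟨w, hw, h1, h2⟩ := hm v hv3
        exact ⟨w, by simp only [List.mem_cons]; exact Or.inr (Or.inr hw), h1, h2⟩


/-- Claim 4, forward direction, labeling part 2: with `D ⊆ Z` the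
set of "dangerous" vertices (reachable in `G'_{P_Z}` on an alternating path from
a blocking edge, as far end of a matching edge), every edge of `G` between `D`
and `V ∖ V'` is labeled `(−,−)` with respect to `P`. -/
theorem claim4_label2 {V : Type*} [Fintype V] (R : Roommates V)
    (P : V → Option V) (hP : IsMatching R P) (hpop : Popular R P)
    (U : Set V) (hU : ∀ v, P v = none ↔ v ∈ U)
    (Z : Set V) (hZ : Z = {w | w ∉ U ∧ ∀ x ∈ U, ¬ R.G.Adj w x})
    (PZ : V → Option V) (hPZ : IsMatching R PZ)
    (hsub : ∀ u v, PZ u = some v → P u = some v)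
    (hcov : ∀ z ∈ Z, ∃ y, PZ z = some y)
    (hmeet : ∀ u v, PZ u = some v → u ∈ Z ∨ v ∈ Z)
    (V' : Set V) (hV' : V' = Z ∪ {y | ∃ z ∈ Z, PZ z = some y} ∪ U)
    (D : Set V)
    (hD : D = {z | ∃ (l : List V) (x y : V) (t : List V),
      l = x :: y :: t ∧ x ∈ V' ∧ y ∈ V' ∧ Blocks R PZ x y ∧
      AltList (fun a b => a ∈ V' ∧ b ∈ V' ∧ NonMatchEdge R PZ a b) PZ false l ∧
      l.Nodup ∧ Odd l.length ∧ l.getLast? = some z}) :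
    ∀ z ∈ D, ∀ x, x ∉ V' → R.G.Adj z x →
      ¬ VotePlus R P z x ∧ ¬ VotePlus R P x z := by
  classical
  intro z hz x hxV' hadj
  by_contra hcon
  rw [not_and_or, not_not, not_not] at hcon
  rw [hD] at hz
  obtain ⟨l, x0, y0, t, hl, hx0V, hy0V, hblock, halt, hnodup, hodd, hlast⟩ := hz
  subst hl
  have hUV' : U ⊆ V' := by rw [hV']; intro v hv; exact Or.inr hv
  have hZV' : Z ⊆ V' := by rw [hV']; intro v hv; exact Or.inl (Or.inl hv)
  have matchedV' : ∀ v w, PZ v = some w → v ∈ V' := by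
    intro v w h
    rcases hmeet v w h with h1 | h1
    · exact hZV' h1
    · rw [hV']; exact Or.inl (Or.inr ⟨w, h1, (hPZ v w h).2⟩)
  have agree : ∀ v ∈ V', P v = PZ v := by
    intro v hv
    rw [hV'] at hv
    rcases hv with (hv | hv) | hv
    · obtain ⟨y, hy⟩ := hcov v hv
      rw [hy, hsub v y hy]
    · obtain ⟨z0, hz0, hz0'⟩ := hv
      have h2 := (hPZ z0 v hz0').2
      rw [h2, hsub v z0 h2]
    · have h1 : P v = none := (hU v).2 hv
      cases hpz : PZ v with
      | none => rw [h1]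
      | some w =>
        rw [hsub v w hpz] at h1
        exact absurd h1 (by simp)
  obtain ⟨pr, z', heq, hA, hmch⟩ := alt_extract R PZ hPZ _ (y0 :: t) x0 halt hodd
  have hz' : z' = z := by
    have h2 := hlast
    rw [heq, List.getLast?_concat] at h2
    exact Option.some.inj h2
  rw [hz'] at heq
  have hzt : z ∈ y0 :: t := by
    rw [List.getLast?_cons_cons] at hlast
    obtain ⟨hne, he⟩ := List.mem_getLast?_eq_getLast (l := y0 :: t) (x := z)
      (Option.mem_def.2 hlast)
    exact he ▸ List.getLast_mem hne
  obtain ⟨w0, hw0mem, hzw0, hw0z⟩ := hmch z hzt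
  have hlV' : ∀ v ∈ x0 :: y0 :: t, v ∈ V' := by
    intro v hv
    rw [heq] at hv
    rcases List.mem_append.1 hv with hv | hv
    · obtain ⟨p, hp, hc⟩ := mem_flatP hv
      have h3 := hA p hp
      rcases hc with rfl | rfl
      · exact h3.1
      · exact h3.2.1
    · rw [List.mem_singleton.1 hv]
      exact matchedV' z w0 hzw0
  have hx_notl : x ∉ x0 :: y0 :: t := fun h => hxV' (hlV' x h)
  have hxU : x ∉ U := fun h => hxV' (hUV' h)
  obtain ⟨px, hpx⟩ : ∃ px, P x = some px := by
    cases h : P x with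
    | none => exact absurd ((hU x).1 h) hxU
    | some w => exact ⟨w, rfl⟩
  have hpxx : P px = some x := (hP x px hpx).2
  have hpxV' : px ∉ V' := by
    intro h
    have h2 : PZ px = some x := by rw [← agree px h]; exact hpxx
    exact hxV' (matchedV' x px (hPZ px x h2).2)
  have hpxU : px ∉ U := by
    intro h
    rw [(hU px).2 h] at hpxx
    exact absurd hpxx (by simp)
  have hpxZ : px ∉ Z := fun h => hpxV' (hZV' h)
  obtain ⟨u, hu, hpu⟩ : ∃ u ∈ U, R.G.Adj px u := by
    rw [hZ] at hpxZ
    simp only [Set.mem_setOf_eq, not_and, not_forall] at hpxZ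
    obtain ⟨u, hu, hadj'⟩ := hpxZ hpxU
    exact ⟨u, hu, not_not.1 hadj'⟩
  have hpuU : P u = none := (hU u).2 hu
  have huV' : u ∈ V' := hUV' hu
  have hux : u ≠ x := fun e => hxV' (e ▸ huV')
  have hupx : u ≠ px := fun e => hpxV' (e ▸ huV')
  have hxpx : x ≠ px := (hP x px hpx).1.ne
  have hpx_notl : px ∉ x0 :: y0 :: t := fun h => hpxV' (hlV' px h)
  have hu_tail : u ∉ y0 :: t := by
    intro h
    obtain ⟨w, _, h1, _⟩ := hmch u h
    rw [hsub u w h1] at hpuU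
    exact absurd hpuU (by simp)
  have goodA : ∀ p ∈ pr, GoodEdge R P p.1 p.2 := by
    intro p hp
    obtain ⟨h1, h2, hadj2, hne2, hvote2⟩ := hA p hp
    refine ⟨hadj2, ?_, ?_, ?_⟩
    · rw [agree p.1 h1]; exact hne2
    · intro h
      apply hne2
      rw [← agree p.1 h1]
      exact (hP p.2 p.1 h).2
    · rcases hvote2 with h | h
      · exact Or.inl (fun w hw => h w (by rwa [agree p.1 h1] at hw))
      · exact Or.inr (fun w hw => h w (by rwa [agree p.2 h2] at hw))
  have hzV' : z ∈ V' := matchedV' z w0 hzw0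
  have goodZX : GoodEdge R P z x := by
    refine ⟨hadj, ?_, ?_, hcon⟩
    · rw [hsub z w0 hzw0]
      intro h
      exact hxV' ((Option.some.inj h) ▸ hlV' w0 (List.mem_cons_of_mem x0 hw0mem))
    · rw [hpx]
      intro h
      exact hpxV' ((Option.some.inj h) ▸ hzV')
  have goodPU : GoodEdge R P px u := by
    refine ⟨hpu, ?_, ?_, Or.inr (fun w hw => absurd hw (by rw [hpuU]; simp))⟩
    · rw [hpxx]; intro h; exact hux (Option.some.inj h).symm
    · rw [hpuU]; simp
  obtain ⟨hbadj, hbne, hb3, hb4⟩ := hblock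
  have habP : VotePlus R P x0 y0 := fun w hw => hb3 w (by rwa [agree x0 hx0V] at hw)
  have hbaP : VotePlus R P y0 x0 := fun w hw => hb4 w (by rwa [agree y0 hy0V] at hw)
  have goodXY : GoodEdge R P x0 y0 := by
    refine ⟨hbadj, ?_, ?_, Or.inl habP⟩
    · rw [agree x0 hx0V]; exact hbne
    · intro h
      apply hbne
      rw [← agree x0 hx0V]
      exact (hP y0 x0 h).2
  obtain ⟨p0, pr', rfl⟩ : ∃ p0 pr', pr = p0 :: pr' := by
    cases pr with
    | nil => simp at heq
    | cons p0 pr' => exact ⟨p0, pr', rfl⟩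
  obtain ⟨q1, q2⟩ := p0
  have heq2 : x0 = q1 ∧ y0 = q2 ∧ t = flatP pr' ++ [z] := by
    simp only [flatP_cons, List.cons_append, List.cons.injEq] at heq
    exact ⟨heq.1, heq.2.1, heq.2.2⟩
  obtain ⟨e1, e2, ht⟩ := heq2
  subst e1
  subst e2
  by_cases hcase : u = x0
  · -- cycle case
    have hx0U : P x0 = none := by rw [← hcase]; exact hpuU
    have hsupA : flatP ((x0,y0) :: (pr' ++ [(z,x)])) ++ (some px : Option V).toList
        = (x0 :: y0 :: t) ++ [x, px] := by
      simp [flatP_append, ht]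
    refine engine R P hP hpop x0 y0 (pr' ++ [(z,x)]) (some px) ?_ ?_ ?_ habP hbaP
    · rw [hsupA, List.nodup_append]
      refine ⟨hnodup, by simp [hxpx], ?_⟩
      intro a ha b hb e; subst e
      simp only [List.mem_cons, List.not_mem_nil, or_false] at hb
      rcases hb with rfl | rfl
      · exact hx_notl ha
      · exact hpx_notl ha
    · intro p hp
      rcases List.mem_cons.1 hp with h | hp
      · rw [h]; exact goodXY
      rcases List.mem_append.1 hp with hp | hp
      · exact goodA p (List.mem_cons_of_mem _ hp)
      · rw [List.mem_singleton.1 hp]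
        exact goodZX
    · intro v hv w hw
      rw [hsupA] at hv ⊢
      rcases List.mem_append.1 hv with hv | hv
      · rcases List.mem_cons.1 hv with rfl | hv
        · rw [hx0U] at hw; exact absurd hw (by simp)
        · obtain ⟨w1, hw1, h1, _⟩ := hmch v hv
          rw [hsub v w1 h1] at hw
          obtain rfl := Option.some.inj hw
          exact List.mem_append.2 (Or.inl (List.mem_cons_of_mem x0 hw1))
      · simp only [List.mem_cons, List.not_mem_nil, or_false] at hv
        rcases hv with rfl | rfl
        · rw [hpx] at hw
          obtain rfl := Option.some.inj hw
          exact List.mem_append.2 (Or.inr (by simp))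
        · rw [hpxx] at hw
          obtain rfl := Option.some.inj hw
          exact List.mem_append.2 (Or.inr (by simp))
  · -- path case
    have hu_notl : u ∉ x0 :: y0 :: t := by
      intro h
      rcases List.mem_cons.1 h with h | h
      · exact hcase h
      · exact hu_tail h
    have hgoodB : ∀ p ∈ (x0,y0) :: (pr' ++ [(z,x),(px,u)]), GoodEdge R P p.1 p.2 := by
      intro p hp
      rcases List.mem_cons.1 hp with h | hp
      · rw [h]; exact goodXY
      rcases List.mem_append.1 hp with hp | hp
      · exact goodA p (List.mem_cons_of_mem _ hp)
      rcases List.mem_cons.1 hp with h | hp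
      · rw [h]; exact goodZX
      · rw [List.mem_singleton.1 hp]; exact goodPU
    cases hx0m : P x0 with
    | none =>
      have hsupB : flatP ((x0,y0) :: (pr' ++ [(z,x), (px,u)])) ++ (none : Option V).toList
          = (x0 :: y0 :: t) ++ [x, px, u] := by
        simp [flatP_append, ht]
      refine engine R P hP hpop x0 y0 (pr' ++ [(z,x),(px,u)]) none ?_ hgoodB ?_ habP hbaP
      · rw [hsupB, List.nodup_append]
        refine ⟨hnodup, by simp [hxpx, Ne.symm hux, Ne.symm hupx], ?_⟩
        intro a ha b hb e; subst e
        simp only [List.mem_cons, List.not_mem_nil, or_false] at hb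
        rcases hb with rfl | rfl | rfl
        · exact hx_notl ha
        · exact hpx_notl ha
        · exact hu_notl ha
      · intro v hv w hw
        rw [hsupB] at hv ⊢
        rcases List.mem_append.1 hv with hv | hv
        · rcases List.mem_cons.1 hv with rfl | hv
          · rw [hx0m] at hw; exact absurd hw (by simp)
          · obtain ⟨w1, hw1, h1, _⟩ := hmch v hv
            rw [hsub v w1 h1] at hw
            obtain rfl := Option.some.inj hw
            exact List.mem_append.2 (Or.inl (List.mem_cons_of_mem x0 hw1))
        · simp only [List.mem_cons, List.not_mem_nil, or_false] at hv
          rcases hv with rfl | rfl | rfl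
          · rw [hpx] at hw
            obtain rfl := Option.some.inj hw
            exact List.mem_append.2 (Or.inr (by simp))
          · rw [hpxx] at hw
            obtain rfl := Option.some.inj hw
            exact List.mem_append.2 (Or.inr (by simp))
          · rw [hpuU] at hw; exact absurd hw (by simp)
    | some q =>
      have hqx0 : P q = some x0 := (hP x0 q hx0m).2
      have hq_notl : q ∉ x0 :: y0 :: t := by
        intro h
        rcases List.mem_cons.1 h with he | h
        · exact ((hP x0 x0 (by rw [hx0m, he])).1).ne rfl
        · obtain ⟨w1, hw1, h1, _⟩ := hmch q h
          rw [hsub q w1 h1] at hqx0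
          have hx0t : x0 ∈ y0 :: t := by
            rw [← Option.some.inj hqx0]; exact hw1
          exact (List.nodup_cons.1 hnodup).1 hx0t
      have hqx : q ≠ x := by
        intro e
        rw [e, hpx] at hqx0
        exact hpxV' (by rw [Option.some.inj hqx0]; exact hx0V)
      have hqpx : q ≠ px := by
        intro e
        rw [e, hpxx] at hqx0
        exact hxV' (by rw [Option.some.inj hqx0]; exact hx0V)
      have hqu : q ≠ u := by
        intro e
        rw [← e, hqx0] at hpuU
        exact absurd hpuU (by simp)
      have hsupC : flatP ((x0,y0) :: (pr' ++ [(z,x), (px,u)])) ++ (some q : Option V).toList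
          = (x0 :: y0 :: t) ++ [x, px, u, q] := by
        simp [flatP_append, ht]
      refine engine R P hP hpop x0 y0 (pr' ++ [(z,x),(px,u)]) (some q) ?_ hgoodB ?_ habP hbaP
      · rw [hsupC, List.nodup_append]
        refine ⟨hnodup, by simp [hxpx, Ne.symm hux, Ne.symm hupx, Ne.symm hqx,
          Ne.symm hqpx, Ne.symm hqu], ?_⟩
        intro a ha b hb e; subst e
        simp only [List.mem_cons, List.not_mem_nil, or_false] at hb
        rcases hb with rfl | rfl | rfl | rfl
        · exact hx_notl ha
        · exact hpx_notl ha
        · exact hu_notl ha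
        · exact hq_notl ha
      · intro v hv w hw
        rw [hsupC] at hv ⊢
        rcases List.mem_append.1 hv with hv | hv
        · rcases List.mem_cons.1 hv with rfl | hv
          · rw [hx0m] at hw
            obtain rfl := Option.some.inj hw
            exact List.mem_append.2 (Or.inr (by simp))
          · obtain ⟨w1, hw1, h1, _⟩ := hmch v hv
            rw [hsub v w1 h1] at hw
            obtain rfl := Option.some.inj hw
            exact List.mem_append.2 (Or.inl (List.mem_cons_of_mem x0 hw1))
        · simp only [List.mem_cons, List.not_mem_nil, or_false] at hv
          rcases hv with rfl | rfl | rfl | rfl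
          · rw [hpx] at hw
            obtain rfl := Option.some.inj hw
            exact List.mem_append.2 (Or.inr (by simp))
          · rw [hpxx] at hw
            obtain rfl := Option.some.inj hw
            exact List.mem_append.2 (Or.inr (by simp))
          · rw [hpuU] at hw; exact absurd hw (by simp)
          · rw [hqx0] at hw
            obtain rfl := Option.some.inj hw
            exact List.mem_append.2 (Or.inl (by simp))
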